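/- If u: [0,∞) → (0,∞) solves u'' = (1+(u')²)·((u − u'·y)/2 + (n−2)/u) with n ≥ 3, u(0) = C > 0, u'(0) = 0, then at every interior point y > 0 where u''(y) = 0 one has u'''(y) = −(1+(u'(y))²)·(n−2)·u'(y)/u(y)² < 0; consequently every critical point of u' is a strict local maximum. -/

import Mathlib

open Set Filter Topology

/-- For a solution of the self-expander ODE with `n ≥ 3`, `u(0)=C>0`, `u'(0)=0`:
at every `y > 0` with `u''(y) = 0` one has
`u'''(y) = -(1+(u'(y))²)(n-2)u'(y)/u(y)² < 0`; consequently every critical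
point of `u'` is a strict local maximum of `u'`. -/
theorem selfexpander_critical_points_of_deriv_strict_local_max
    (n : ℕ) (hn : 3 ≤ n) (C : ℝ) (hC : 0 < C) (u u' u'' u''' : ℝ → ℝ)
    (hpos : ∀ y ∈ Ici (0:ℝ), 0 < u y)
    (hd1 : ∀ y ∈ Ici (0:ℝ), HasDerivWithinAt u (u' y) (Ici 0) y)
    (hd2 : ∀ y ∈ Ici (0:ℝ), HasDerivWithinAt u' (u'' y) (Ici 0) y)
    (hd3 : ∀ y ∈ Ici (0:ℝ), HasDerivWithinAt u'' (u''' y) (Ici 0) y)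
    (hcont : ContinuousOn u''' (Ici 0))
    (hODE : ∀ y ∈ Ici (0:ℝ),
      u'' y = (1 + (u' y)^2) * ((u y - u' y * y)/2 + ((n : ℝ) - 2) / u y))
    (hu0 : u 0 = C) (hu'0 : u' 0 = 0) :
    ∀ y : ℝ, 0 < y → u'' y = 0 →
      u''' y = -(1 + (u' y)^2) * ((n : ℝ) - 2) * u' y / (u y)^2 ∧
      u''' y < 0 ∧
      ∀ᶠ z in 𝓝[≠] y, u' z < u' y := by
  intro y hy h0
  have hyI : y ∈ Ici (0:ℝ) := le_of_lt hy
  have hnhds : Ici (0:ℝ) ∈ 𝓝 y := Ici_mem_nhds hy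
  have hupos : 0 < u y := hpos y hyI
  have hc1 : (1:ℝ) ≤ (n:ℝ) - 2 := by
    have : (3:ℝ) ≤ (n:ℝ) := by exact_mod_cast hn
    linarith
  -- key equation from ODE at y
  have hkey : (u y - u' y * y)/2 + ((n:ℝ) - 2) / u y = 0 := by
    have := hODE y hyI
    rw [h0] at this
    have h1 : (0:ℝ) < 1 + (u' y)^2 := by positivity
    have := this.symm
    rcases mul_eq_zero.mp this with h | h
    · exact absurd h (ne_of_gt h1)
    · exact h
  -- u' y > 0
  have hp : 0 < u' y := by
    by_contra hle
    push_neg at hle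
    have h1 : 0 < ((n:ℝ) - 2) / u y := div_pos (by linarith) hupos
    have h2 : 0 ≤ -(u' y) * y := mul_nonneg (by linarith) (le_of_lt hy)
    have : 0 < (u y - u' y * y)/2 := by nlinarith
    linarith
  -- HasDerivAt versions at y
  have H0 : HasDerivAt u (u' y) y := (hd1 y hyI).hasDerivAt hnhds
  have H1 : HasDerivAt u' (u'' y) y := (hd2 y hyI).hasDerivAt hnhds
  have H2 : HasDerivAt u'' (u''' y) y := (hd3 y hyI).hasDerivAt hnhds
  set c : ℝ := (n:ℝ) - 2 with hc
  -- derivative of the RHS of the ODE at y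
  have A : HasDerivAt (fun z => 1 + (u' z)^2) (2 * u' y * u'' y) y := by
    have := (H1.pow 2).const_add (1:ℝ)
    exact this.congr_deriv (by norm_num <;> ring)
  have B1 : HasDerivAt (fun z => (u z - u' z * z)/2)
      ((u' y - (u'' y * y + u' y * 1))/2) y := by
    exact ((H0.sub (H1.mul (hasDerivAt_id y))).div_const 2)
  have B2 : HasDerivAt (fun z => c / u z)
      ((0 * u y - c * u' y) / (u y)^2) y :=
    (hasDerivAt_const y c).div H0 (ne_of_gt hupos)
  have B := B1.add B2
  have Hg : HasDerivAt (fun z => (1 + (u' z)^2) * ((u z - u' z * z)/2 + c / u z))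
      ((2 * u' y * u'' y) * ((u y - u' y * y)/2 + c / u y)
        + (1 + (u' y)^2) * ((u' y - (u'' y * y + u' y * 1))/2 + (0 * u y - c * u' y) / (u y)^2))
      y := A.mul B
  have hev : u'' =ᶠ[𝓝 y] (fun z => (1 + (u' z)^2) * ((u z - u' z * z)/2 + c / u z)) :=
    eventually_of_mem hnhds (fun z hz => hODE z hz)
  have H2' : HasDerivAt (fun z => (1 + (u' z)^2) * ((u z - u' z * z)/2 + c / u z))
      (u''' y) y := H2.congr_of_eventuallyEq hev.symm
  have hval : u''' y = -(1 + (u' y)^2) * c * u' y / (u y)^2 := by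
    have heq := Hg.unique H2'
    rw [← heq, h0]
    field_simp
    ring
  refine ⟨hval, ?_, ?_⟩
  · -- negativity
    have hnum : 0 < (1 + (u' y)^2) * c * u' y := by positivity
    have : 0 < (1 + (u' y)^2) * c * u' y / (u y)^2 := div_pos hnum (by positivity)
    rw [hval]
    have hcpos : (0:ℝ) < c := by linarith
    exact div_neg_of_neg_of_pos
      (by nlinarith [mul_pos (mul_pos (show (0:ℝ) < 1 + (u' y)^2 from by positivity) hcpos) hp])
      (by positivity)
  · -- strict local max
    have h3neg : u''' y < 0 := by
      rw [hval]
      have hcpos : (0:ℝ) < c := by linarith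
      exact div_neg_of_neg_of_pos
        (by nlinarith [mul_pos (mul_pos (show (0:ℝ) < 1 + (u' y)^2 from by positivity) hcpos) hp])
        (by positivity)
    have hcontAt : ContinuousAt u''' y := (hcont y hyI).continuousAt hnhds
    have hevneg : ∀ᶠ z in 𝓝 y, u''' z < 0 := by
      have : Iio (0:ℝ) ∈ 𝓝 (u''' y) := Iio_mem_nhds h3neg
      exact hcontAt.eventually_mem this
    obtain ⟨ε, hε, hball⟩ := Metric.eventually_nhds_iff_ball.mp hevneg
    set δ : ℝ := min ε y with hδdef
    have hδ : 0 < δ := lt_min hε hy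
    have hδy : δ ≤ y := min_le_right _ _
    set a := y - δ with ha
    set b := y + δ with hb
    have haIci : (0:ℝ) ≤ a := by simp [ha]; linarith
    have hδε : δ ≤ ε := min_le_left _ _
    have hsub : Ioo a b ⊆ Metric.ball y ε := by
      intro x hx
      rw [Real.ball_eq_Ioo]
      have hae : y - ε ≤ a := by simp only [ha]; linarith
      have hbe : b ≤ y + ε := by simp only [hb]; linarith
      exact ⟨lt_of_le_of_lt hae hx.1, lt_of_lt_of_le hx.2 hbe⟩
    have hderiv : ∀ x ∈ Ioo a b, HasDerivAt u' (u'' x) x := by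
      intro x hx
      have hx0 : 0 < x := lt_of_le_of_lt haIci hx.1
      exact (hd2 x (le_of_lt hx0)).hasDerivAt (Ici_mem_nhds hx0)
    have hderiv2 : ∀ x ∈ Ioo a b, HasDerivAt u'' (u''' x) x := by
      intro x hx
      have hx0 : 0 < x := lt_of_le_of_lt haIci hx.1
      exact (hd3 x (le_of_lt hx0)).hasDerivAt (Ici_mem_nhds hx0)
    have hcontu' : ContinuousOn u' (Icc a b) := by
      intro x hx
      have hx0 : (0:ℝ) ≤ x := le_trans haIci hx.1
      exact ((hd2 x hx0).continuousWithinAt).mono (fun z hz => le_trans haIci hz.1)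
    have hcontu'' : ContinuousOn u'' (Icc a b) := by
      intro x hx
      have hx0 : (0:ℝ) ≤ x := le_trans haIci hx.1
      exact ((hd3 x hx0).continuousWithinAt).mono (fun z hz => le_trans haIci hz.1)
    -- u'' strictly decreasing on Icc a b
    have hanti : StrictAntiOn u'' (Icc a b) := by
      apply StrictAntiOn.mono ?_ (subset_refl _)
      apply strictAntiOn_of_deriv_neg (convex_Icc a b) hcontu''
      intro x hx
      rw [interior_Icc] at hx
      rw [(hderiv2 x hx).deriv]
      exact hball x (hsub hx)
    have hyab : y ∈ Icc a b := ⟨by simp [ha]; linarith, by simp [hb]; linarith⟩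
    -- u'' > 0 on [a, y), u'' < 0 on (y, b]
    have hpos'' : ∀ x ∈ Icc a b, x < y → 0 < u'' x := by
      intro x hx hxy
      have := hanti hx hyab hxy
      rwa [h0] at this
    have hneg'' : ∀ x ∈ Icc a b, y < x → u'' x < 0 := by
      intro x hx hxy
      have := hanti hyab hx hxy
      rwa [h0] at this
    -- u' strictly increasing on [a, y]
    have hmono : StrictMonoOn u' (Icc a y) := by
      apply strictMonoOn_of_deriv_pos (convex_Icc a y)
        (hcontu'.mono (Icc_subset_Icc_right (by simp [hb]; linarith)))
      intro x hx
      rw [interior_Icc] at hx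
      have hxab : x ∈ Ioo a b := ⟨hx.1, by have := hx.2; simp [hb]; linarith⟩
      rw [(hderiv x hxab).deriv]
      exact hpos'' x ⟨le_of_lt hx.1, le_of_lt (lt_of_lt_of_le hx.2 (by simp [hb]; linarith))⟩ hx.2
    -- u' strictly decreasing on [y, b]
    have hanti' : StrictAntiOn u' (Icc y b) := by
      apply strictAntiOn_of_deriv_neg (convex_Icc y b)
        (hcontu'.mono (Icc_subset_Icc_left (by simp [ha]; linarith)))
      intro x hx
      rw [interior_Icc] at hx
      have hxab : x ∈ Ioo a b := ⟨by have := hx.1; simp [ha]; linarith, hx.2⟩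
      rw [(hderiv x hxab).deriv]
      exact hneg'' x ⟨le_of_lt (lt_of_le_of_lt (by simp [ha]; linarith : a ≤ y) hx.1), le_of_lt hx.2⟩ hx.1
    -- conclude
    have hIoo : Ioo a b ∈ 𝓝 y :=
      Ioo_mem_nhds (by simp [ha]; linarith) (by simp [hb]; linarith)
    have hIoo' : ∀ᶠ z in 𝓝[≠] y, z ∈ Ioo a b :=
      eventually_nhdsWithin_of_eventually_nhds (eventually_of_mem hIoo (fun z hz => hz))
    filter_upwards [hIoo', self_mem_nhdsWithin] with z hz hzne
    rcases lt_or_gt_of_ne hzne with hlt | hgt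
    · exact hmono ⟨le_of_lt hz.1, le_of_lt hlt⟩ ⟨by simp [ha]; linarith, le_refl y⟩ hlt
    · exact hanti' ⟨le_refl y, by simp [hb]; linarith⟩ ⟨le_of_lt hgt, le_of_lt hz.2⟩ hgt
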